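/- arXiv:2207.12417 — 4 statements merged into one kernel-verified Lean document; each statement's English description precedes it below -/
import Mathlib

section
/- Under assumptions (i) and (ii), the identity ((x⊗u)w)(y⊗v) = (x⊗u)(w(y⊗v)) holds for all parity-homogeneous x ∈ K ⊕ G_{±1}, y ∈ K ⊕ G_{∓1} and all u, v, w ∈ U₀. -/
open scoped TensorProduct

/-- The right action of `U₀` on `U_{±1} = G ⊗ U₀`, determined by bilinearity and the
rule `(x ⊗ u)v = x ⊗ (uv)`. -/
noncomputable def rmul {K U0 G : Type*} [Field K] [Ring U0] [Algebra K U0]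
    [AddCommGroup G] [Module K G] (z : G ⊗[K] U0) (v : U0) : G ⊗[K] U0 :=
  TensorProduct.map LinearMap.id (LinearMap.mulRight K v) z

/-- The total-parity components of `U_{±1} = G ⊗ U₀`: the parity-`s` component is spanned by
the tensors `x ⊗ u` with `x` of parity `p` in `G`, `u` of parity `t` in `U₀` and `p + t = s`. -/
def tpar {K U0 G : Type*} [Field K] [Ring U0] [Algebra K U0]
    [AddCommGroup G] [Module K G] (q : ZMod 2 → Submodule K G)
    (p0 : ZMod 2 → Submodule K U0) (s : ZMod 2) : Submodule K (G ⊗[K] U0) :=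
  Submodule.span K {z | ∃ p t, p + t = s ∧ ∃ x ∈ q p, ∃ u ∈ p0 t, z = x ⊗ₜ[K] u}

section

variable (K : Type*) [Field K] [CharZero K]
  -- (a) a unital associative `ℤ/2ℤ`-graded `K`-algebra `U₀`,
  (U0 : Type*) [Ring U0] [Algebra K U0]
  (p0 : ZMod 2 → Submodule K U0) [GradedAlgebra p0]
  -- generated as a unital algebra by a graded subspace `g ⊆ U₀`,
  (g : Submodule K U0)
  -- (b) `ℤ/2ℤ`-graded `K`-vector spaces `G₁` and `G₋₁`; `U₁ := G₁ ⊗ U₀`, `U₋₁ := G₋₁ ⊗ U₀`,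
  (G1 Gm : Type*) [AddCommGroup G1] [Module K G1] [AddCommGroup Gm] [Module K Gm]
  (q1 : ZMod 2 → Submodule K G1) (qm : ZMod 2 → Submodule K Gm)
  [DirectSum.Decomposition q1] [DirectSum.Decomposition qm]
  -- (c) the products `U₁ × U₋₁ → U₀`, `U₋₁ × U₁ → U₀`, `U₀ × U_{±1} → U_{±1}`
  --     (the products `U_{±1} × U₀ → U_{±1}` are given by `rmul`),
  (mpm : G1 ⊗[K] U0 →ₗ[K] Gm ⊗[K] U0 →ₗ[K] U0)
  (mmp : Gm ⊗[K] U0 →ₗ[K] G1 ⊗[K] U0 →ₗ[K] U0)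
  (a0p : U0 →ₗ[K] G1 ⊗[K] U0 →ₗ[K] G1 ⊗[K] U0)
  (a0m : U0 →ₗ[K] Gm ⊗[K] U0 →ₗ[K] Gm ⊗[K] U0)
  -- (d) parity-preserving brackets `⟦−,−⟧ : g × G_{±1} → G_{±1}`
  (b1 : g →ₗ[K] G1 →ₗ[K] G1)
  (bm : g →ₗ[K] Gm →ₗ[K] Gm)

/-- hypotheses of the context: `g` is a graded subspace generating `U₀`; the products and
brackets are parity-preserving; `1 ∈ U₀` acts as the identity on `U_{±1}`;
assumptions (i) and (ii). -/
structure ContextHyps : Prop where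
  g_graded : ∀ x ∈ g, ∀ p : ZMod 2, (DirectSum.decompose p0 x p : U0) ∈ g
  g_gen : Algebra.adjoin K (g : Set U0) = ⊤
  mpm_par : ∀ (s t : ZMod 2) (z : G1 ⊗[K] U0) (w : Gm ⊗[K] U0),
    z ∈ tpar q1 p0 s → w ∈ tpar qm p0 t → mpm z w ∈ p0 (s + t)
  mmp_par : ∀ (s t : ZMod 2) (z : Gm ⊗[K] U0) (w : G1 ⊗[K] U0),
    z ∈ tpar qm p0 s → w ∈ tpar q1 p0 t → mmp z w ∈ p0 (s + t)
  a0p_par : ∀ (s t : ZMod 2) (u : U0) (z : G1 ⊗[K] U0),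
    u ∈ p0 s → z ∈ tpar q1 p0 t → a0p u z ∈ tpar q1 p0 (s + t)
  a0m_par : ∀ (s t : ZMod 2) (u : U0) (z : Gm ⊗[K] U0),
    u ∈ p0 s → z ∈ tpar qm p0 t → a0m u z ∈ tpar qm p0 (s + t)
  a0p_one : ∀ z : G1 ⊗[K] U0, a0p 1 z = z
  a0m_one : ∀ z : Gm ⊗[K] U0, a0m 1 z = z
  b1_par : ∀ (t p : ZMod 2) (z : g) (x : G1),
    (z : U0) ∈ p0 t → x ∈ q1 p → b1 z x ∈ q1 (t + p)
  bm_par : ∀ (t p : ZMod 2) (z : g) (x : Gm),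
    (z : U0) ∈ p0 t → x ∈ qm p → bm z x ∈ qm (t + p)
  -- assumption (i): `x(y ⊗ v) = (xy)v`
  i_pm : ∀ (x : G1) (y : Gm) (v : U0),
    mpm (x ⊗ₜ[K] 1) (y ⊗ₜ[K] v) = mpm (x ⊗ₜ[K] 1) (y ⊗ₜ[K] 1) * v
  i_mp : ∀ (x : Gm) (y : G1) (v : U0),
    mmp (x ⊗ₜ[K] 1) (y ⊗ₜ[K] v) = mmp (x ⊗ₜ[K] 1) (y ⊗ₜ[K] 1) * v
  -- assumption (ii):
  -- `(x ⊗ (uz))(y ⊗ v) = (x ⊗ u)(⟦z,y⟧ ⊗ v) + (−1)^{|y||z|}(x ⊗ u)(y ⊗ (zv))`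
  ii_pm : ∀ (t s : ZMod 2) (z : g), (z : U0) ∈ p0 t → ∀ y : Gm, y ∈ qm s →
    ∀ (x : G1) (u v : U0),
    mpm (x ⊗ₜ[K] (u * (z : U0))) (y ⊗ₜ[K] v)
      = mpm (x ⊗ₜ[K] u) (bm z y ⊗ₜ[K] v)
        + ((-1 : K) ^ (s * t).val) • mpm (x ⊗ₜ[K] u) (y ⊗ₜ[K] ((z : U0) * v))
  ii_mp : ∀ (t s : ZMod 2) (z : g), (z : U0) ∈ p0 t → ∀ y : G1, y ∈ q1 s →
    ∀ (x : Gm) (u v : U0),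
    mmp (x ⊗ₜ[K] (u * (z : U0))) (y ⊗ₜ[K] v)
      = mmp (x ⊗ₜ[K] u) (b1 z y ⊗ₜ[K] v)
        + ((-1 : K) ^ (s * t).val) • mmp (x ⊗ₜ[K] u) (y ⊗ₜ[K] ((z : U0) * v))
  ii_0p : ∀ (t s : ZMod 2) (z : g), (z : U0) ∈ p0 t → ∀ y : G1, y ∈ q1 s →
    ∀ u v : U0,
    a0p (u * (z : U0)) (y ⊗ₜ[K] v)
      = a0p u (b1 z y ⊗ₜ[K] v)
        + ((-1 : K) ^ (s * t).val) • a0p u (y ⊗ₜ[K] ((z : U0) * v))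
  ii_0m : ∀ (t s : ZMod 2) (z : g), (z : U0) ∈ p0 t → ∀ y : Gm, y ∈ qm s →
    ∀ u v : U0,
    a0m (u * (z : U0)) (y ⊗ₜ[K] v)
      = a0m u (bm z y ⊗ₜ[K] v)
        + ((-1 : K) ^ (s * t).val) • a0m u (y ⊗ₜ[K] ((z : U0) * v))

end


section MyAux

variable {K U0 : Type*} [Field K] [Ring U0] [Algebra K U0]
  (p0 : ZMod 2 → Submodule K U0) [GradedAlgebra p0] {g : Submodule K U0}
  {G A : Type*} [AddCommGroup G] [Module K G] [AddCommGroup A] [Module K A]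
  (q : ZMod 2 → Submodule K G) [DirectSum.Decomposition q]

lemma my_sum_decompose {M : Type*} [AddCommGroup M] [Module K M]
    (q' : ZMod 2 → Submodule K M) [DirectSum.Decomposition q'] (y : M) :
    ∑ s : ZMod 2, (DirectSum.decompose q' y s : M) = y := by
  classical
  calc ∑ s : ZMod 2, (DirectSum.decompose q' y s : M)
      = ∑ s ∈ (DirectSum.decompose q' y).support, (DirectSum.decompose q' y s : M) := by
        symm
        refine Finset.sum_subset (Finset.subset_univ _) fun i _ hi => ?_
        rw [DFinsupp.notMem_support_iff.mp hi, ZeroMemClass.coe_zero]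
    _ = y := DirectSum.sum_support_decompose q' y

lemma my_aux1 (hgr : ∀ x ∈ g, ∀ p : ZMod 2, (DirectSum.decompose p0 x p : U0) ∈ g)
    (a0 : U0 →ₗ[K] G ⊗[K] U0 →ₗ[K] G ⊗[K] U0) (b : g →ₗ[K] G →ₗ[K] G)
    (ha1 : ∀ ζ : G ⊗[K] U0, a0 1 ζ = ζ)
    (hii0 : ∀ (t s : ZMod 2) (z : g), (z : U0) ∈ p0 t → ∀ y ∈ q s, ∀ u v : U0,
      a0 (u * (z : U0)) (y ⊗ₜ[K] v) = a0 u (b z y ⊗ₜ[K] v)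
        + ((-1 : K) ^ (s * t).val) • a0 u (y ⊗ₜ[K] ((z : U0) * v)))
    (Φ : U0 →ₗ[K] G ⊗[K] U0 →ₗ[K] A)
    (hΦ : ∀ (t s : ZMod 2) (z : g), (z : U0) ∈ p0 t → ∀ y ∈ q s, ∀ u v : U0,
      Φ (u * (z : U0)) (y ⊗ₜ[K] v) = Φ u (b z y ⊗ₜ[K] v)
        + ((-1 : K) ^ (s * t).val) • Φ u (y ⊗ₜ[K] ((z : U0) * v)))
    (z : g) : ∀ (u : U0) (ζ : G ⊗[K] U0), Φ (u * (z : U0)) ζ = Φ u (a0 (z : U0) ζ) := by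
  have key : ∀ (t s : ZMod 2) (z : g), (z : U0) ∈ p0 t → ∀ y ∈ q s, ∀ u v : U0,
      Φ (u * (z : U0)) (y ⊗ₜ[K] v) = Φ u (a0 (z : U0) (y ⊗ₜ[K] v)) := by
    intro t s z hz y hy u v
    have h1 := hii0 t s z hz y hy 1 v
    rw [one_mul, ha1, ha1] at h1
    rw [h1, map_add, map_smul, hΦ t s z hz y hy u v]
  have key2 : ∀ (z : g) (u v : U0) (y : G),
      Φ (u * (z : U0)) (y ⊗ₜ[K] v) = Φ u (a0 (z : U0) (y ⊗ₜ[K] v)) := by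
    intro z u v y
    have hzdec : (z : U0) = ∑ t : ZMod 2, (DirectSum.decompose p0 (z : U0) t : U0) :=
      (my_sum_decompose p0 _).symm
    have hydec : y = ∑ s : ZMod 2, (DirectSum.decompose q y s : G) :=
      (my_sum_decompose q y).symm
    conv_lhs => rw [hzdec, hydec]
    conv_rhs => rw [hzdec, hydec]
    simp only [Finset.mul_sum, map_sum, LinearMap.sum_apply, TensorProduct.sum_tmul]
    refine Finset.sum_congr rfl fun t _ => Finset.sum_congr rfl fun s _ => ?_
    exact key s t ⟨_, hgr _ z.2 s⟩ (SetLike.coe_mem _) ((DirectSum.decompose q y t : G)) (SetLike.coe_mem _) u v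
  intro u ζ
  induction ζ using TensorProduct.induction_on with
  | zero => simp
  | tmul y v => exact key2 z u v y
  | add ζ1 ζ2 h1 h2 => rw [map_add, h1, h2, map_add, map_add]

lemma my_aux_assoc (hgen : Algebra.adjoin K (g : Set U0) = ⊤)
    (hgr : ∀ x ∈ g, ∀ p : ZMod 2, (DirectSum.decompose p0 x p : U0) ∈ g)
    (a0 : U0 →ₗ[K] G ⊗[K] U0 →ₗ[K] G ⊗[K] U0) (b : g →ₗ[K] G →ₗ[K] G)
    (ha1 : ∀ ζ : G ⊗[K] U0, a0 1 ζ = ζ)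
    (hii0 : ∀ (t s : ZMod 2) (z : g), (z : U0) ∈ p0 t → ∀ y ∈ q s, ∀ u v : U0,
      a0 (u * (z : U0)) (y ⊗ₜ[K] v) = a0 u (b z y ⊗ₜ[K] v)
        + ((-1 : K) ^ (s * t).val) • a0 u (y ⊗ₜ[K] ((z : U0) * v))) :
    ∀ (w u : U0) (ζ : G ⊗[K] U0), a0 (u * w) ζ = a0 u (a0 w ζ) := by
  intro w
  have hw : w ∈ Algebra.adjoin K (g : Set U0) := by rw [hgen]; trivial
  induction hw using Algebra.adjoin_induction with
  | mem x hx => exact fun u ζ => my_aux1 p0 q hgr a0 b ha1 hii0 a0 hii0 ⟨x, hx⟩ u ζ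
  | algebraMap c =>
    intro u ζ
    simp [Algebra.algebraMap_eq_smul_one, mul_smul_comm, ha1, map_smul]
  | add a b' ha hb' hia hib =>
    intro u ζ
    rw [mul_add, map_add, LinearMap.add_apply, hia, hib, map_add, LinearMap.add_apply, map_add]
  | mul a b' ha hb' hia hib =>
    intro u ζ
    rw [← mul_assoc, hib (u * a) ζ, hia u (a0 b' ζ), hib a ζ]

lemma my_aux_main (hgen : Algebra.adjoin K (g : Set U0) = ⊤)
    (hgr : ∀ x ∈ g, ∀ p : ZMod 2, (DirectSum.decompose p0 x p : U0) ∈ g)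
    (a0 : U0 →ₗ[K] G ⊗[K] U0 →ₗ[K] G ⊗[K] U0) (b : g →ₗ[K] G →ₗ[K] G)
    (ha1 : ∀ ζ : G ⊗[K] U0, a0 1 ζ = ζ)
    (hii0 : ∀ (t s : ZMod 2) (z : g), (z : U0) ∈ p0 t → ∀ y ∈ q s, ∀ u v : U0,
      a0 (u * (z : U0)) (y ⊗ₜ[K] v) = a0 u (b z y ⊗ₜ[K] v)
        + ((-1 : K) ^ (s * t).val) • a0 u (y ⊗ₜ[K] ((z : U0) * v)))
    (Φ : U0 →ₗ[K] G ⊗[K] U0 →ₗ[K] A)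
    (hΦ : ∀ (t s : ZMod 2) (z : g), (z : U0) ∈ p0 t → ∀ y ∈ q s, ∀ u v : U0,
      Φ (u * (z : U0)) (y ⊗ₜ[K] v) = Φ u (b z y ⊗ₜ[K] v)
        + ((-1 : K) ^ (s * t).val) • Φ u (y ⊗ₜ[K] ((z : U0) * v))) :
    ∀ (w u : U0) (ζ : G ⊗[K] U0), Φ (u * w) ζ = Φ u (a0 w ζ) := by
  have hassoc := my_aux_assoc p0 q hgen hgr a0 b ha1 hii0
  intro w
  have hw : w ∈ Algebra.adjoin K (g : Set U0) := by rw [hgen]; trivial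
  induction hw using Algebra.adjoin_induction with
  | mem x hx => exact fun u ζ => my_aux1 p0 q hgr a0 b ha1 hii0 Φ hΦ ⟨x, hx⟩ u ζ
  | algebraMap c =>
    intro u ζ
    simp [Algebra.algebraMap_eq_smul_one, mul_smul_comm, ha1, map_smul]
  | add a b' ha hb' hia hib =>
    intro u ζ
    rw [mul_add, map_add, LinearMap.add_apply, hia, hib, map_add, LinearMap.add_apply, map_add]
  | mul a b' ha hb' hia hib =>
    intro u ζ
    rw [← mul_assoc, hib (u * a) ζ, hia u (a0 b' ζ), hassoc b' a ζ]

end MyAux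

/-- Under assumptions (i) and (ii), the identity
`((x⊗u)w)(y⊗v) = (x⊗u)(w(y⊗v))` holds for all parity-homogeneous `x ∈ K ⊕ G_{±1}`,
`y ∈ K ⊕ G_{∓1}` and all `u, v, w ∈ U₀` (stated case by case according to whether `x` and
`y` lie in `K` or in `G_{±1}`; elements of `K` act by scalar multiplication and have
parity `0`). -/
theorem move_w_identity_of_contextHyps
    (K : Type*) [Field K] [CharZero K]
    (U0 : Type*) [Ring U0] [Algebra K U0]
    (p0 : ZMod 2 → Submodule K U0) [GradedAlgebra p0]
    (g : Submodule K U0)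
    (G1 Gm : Type*) [AddCommGroup G1] [Module K G1] [AddCommGroup Gm] [Module K Gm]
    (q1 : ZMod 2 → Submodule K G1) (qm : ZMod 2 → Submodule K Gm)
    [DirectSum.Decomposition q1] [DirectSum.Decomposition qm]
    (mpm : G1 ⊗[K] U0 →ₗ[K] Gm ⊗[K] U0 →ₗ[K] U0)
    (mmp : Gm ⊗[K] U0 →ₗ[K] G1 ⊗[K] U0 →ₗ[K] U0)
    (a0p : U0 →ₗ[K] G1 ⊗[K] U0 →ₗ[K] G1 ⊗[K] U0)
    (a0m : U0 →ₗ[K] Gm ⊗[K] U0 →ₗ[K] Gm ⊗[K] U0)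
    (b1 : g →ₗ[K] G1 →ₗ[K] G1)
    (bm : g →ₗ[K] Gm →ₗ[K] Gm)
    (hyp : ContextHyps K U0 p0 g G1 Gm q1 qm mpm mmp a0p a0m b1 bm) :
    -- case x ∈ G₁, y ∈ G₋₁
    (∀ x : G1, (∃ s, x ∈ q1 s) → ∀ y : Gm, (∃ s, y ∈ qm s) → ∀ u v w : U0,
      mpm (x ⊗ₜ[K] (u * w)) (y ⊗ₜ[K] v) = mpm (x ⊗ₜ[K] u) (a0m w (y ⊗ₜ[K] v))) ∧
    -- case x ∈ G₋₁, y ∈ G₁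
    (∀ x : Gm, (∃ s, x ∈ qm s) → ∀ y : G1, (∃ s, y ∈ q1 s) → ∀ u v w : U0,
      mmp (x ⊗ₜ[K] (u * w)) (y ⊗ₜ[K] v) = mmp (x ⊗ₜ[K] u) (a0p w (y ⊗ₜ[K] v))) ∧
    -- case x = c ∈ K, y ∈ G₁
    (∀ (c : K) (y : G1), (∃ s, y ∈ q1 s) → ∀ u v w : U0,
      a0p ((c • u) * w) (y ⊗ₜ[K] v) = a0p (c • u) (a0p w (y ⊗ₜ[K] v))) ∧
    -- case x = c ∈ K, y ∈ G₋₁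
    (∀ (c : K) (y : Gm), (∃ s, y ∈ qm s) → ∀ u v w : U0,
      a0m ((c • u) * w) (y ⊗ₜ[K] v) = a0m (c • u) (a0m w (y ⊗ₜ[K] v))) ∧
    -- case x ∈ G₁, y = c ∈ K
    (∀ x : G1, (∃ s, x ∈ q1 s) → ∀ (c : K) (u v w : U0),
      rmul (x ⊗ₜ[K] (u * w)) (c • v) = rmul (x ⊗ₜ[K] u) (w * (c • v))) ∧
    -- case x ∈ G₋₁, y = c ∈ K
    (∀ x : Gm, (∃ s, x ∈ qm s) → ∀ (c : K) (u v w : U0),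
      rmul (x ⊗ₜ[K] (u * w)) (c • v) = rmul (x ⊗ₜ[K] u) (w * (c • v))) ∧
    -- case x = c ∈ K, y = c' ∈ K
    (∀ (c c' : K) (u v w : U0),
      ((c • u) * w) * (c' • v) = (c • u) * (w * (c' • v))) := by
    obtain ⟨hgr, hgen, _, _, _, _, hp1, hm1, _, _, _, _, hiipm, hiimp, hii0p, hii0m⟩ := hyp
    refine ⟨?_, ?_, ?_, ?_, ?_, ?_, ?_⟩
    · intro x _ y _ u v w
      exact my_aux_main p0 qm hgen hgr a0m bm hm1 hii0m
        (mpm.comp (TensorProduct.mk K G1 U0 x))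
        (fun t s z hz y' hy' u' v' => hiipm t s z hz y' hy' x u' v') w u (y ⊗ₜ[K] v)
    · intro x _ y _ u v w
      exact my_aux_main p0 q1 hgen hgr a0p b1 hp1 hii0p
        (mmp.comp (TensorProduct.mk K Gm U0 x))
        (fun t s z hz y' hy' u' v' => hiimp t s z hz y' hy' x u' v') w u (y ⊗ₜ[K] v)
    · intro c y _ u v w
      exact my_aux_assoc p0 q1 hgen hgr a0p b1 hp1 hii0p w (c • u) (y ⊗ₜ[K] v)
    · intro c y _ u v w
      exact my_aux_assoc p0 qm hgen hgr a0m bm hm1 hii0m w (c • u) (y ⊗ₜ[K] v)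
    · intro x _ c u v w
      simp only [rmul, TensorProduct.map_tmul, LinearMap.id_coe, id_eq,
        LinearMap.mulRight_apply, mul_assoc]
    · intro x _ c u v w
      simp only [rmul, TensorProduct.map_tmul, LinearMap.id_coe, id_eq,
        LinearMap.mulRight_apply, mul_assoc]
    · intro c c' u v w
      exact mul_assoc _ _ _
end

section
/- Assume additionally (iii): z(xy) = ⟦z,x⟧y + (−1)^{|z||x|} x⟦z,y⟧ + (−1)^{|z|(|x|+|y|)}(xy)z for all parity-homogeneous z ∈ g, x ∈ G_{±1}, y ∈ G_{∓1} (an identity in U₀). Then the collection U₋₁, U₀, U₁, with the given products and with the algebra product on U₀ × U₀, is a focally associative local superalgebra; that is, the 13 identities (u₀v₀)w₀=u₀(v₀w₀), (u_{±1}v₀)w₀=u_{±1}(v₀w₀), (u₀v₀)w_{±1}=u₀(v₀w_{±1}), (u₀v_{±1})w₀=u₀(v_{±1}w₀), (u₀v_{±1})w_{∓1}=u₀(v_{±1}w_{∓1}), (u_{±1}v_{∓1})w₀=u_{±1}(v_{∓1}w₀), (u_{±1}v₀)w_{∓1}=u_{±1}(v₀w_{∓1}) hold for all elements (subscripts denote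 degrees, i.e. membership in U₀ or U_{±1}). -/
open scoped TensorProduct

set_option linter.unusedSectionVars false
namespace FocAux

theorem neg_one_pow_add {K : Type*} [Field K] (a b : ZMod 2) :
    ((-1:K))^((a+b).val) = (-1:K)^a.val * (-1:K)^b.val := by
  rw [ZMod.val_add, ← pow_add]
  rw [← Nat.mod_add_div (a.val + b.val) 2, pow_add, pow_mul]
  norm_num

variable {K U0 : Type*} [Field K] [Ring U0] [Algebra K U0]

section rmul
variable {G : Type*} [AddCommGroup G] [Module K G]

theorem rmul_tmul (x : G) (u v : U0) : rmul (x ⊗ₜ[K] u) v = x ⊗ₜ[K] (u * v) := rfl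

theorem rmul_add_left (z z' : G ⊗[K] U0) (v : U0) :
    rmul (z + z') v = rmul z v + rmul z' v := map_add _ _ _

theorem rmul_smul_left (c : K) (z : G ⊗[K] U0) (v : U0) :
    rmul (c • z) v = c • rmul z v := map_smul _ _ _

theorem rmul_zero_left (v : U0) : rmul (0 : G ⊗[K] U0) v = 0 := map_zero _

theorem rmul_add_right (z : G ⊗[K] U0) (v w : U0) :
    rmul z (v + w) = rmul z v + rmul z w := by
  induction z using TensorProduct.induction_on with
  | zero => simp [rmul_zero_left]
  | tmul x u => simp [rmul_tmul, mul_add, TensorProduct.tmul_add]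
  | add a b ha hb => simp only [rmul_add_left, ha, hb]; abel

theorem rmul_assoc (z : G ⊗[K] U0) (v w : U0) :
    rmul (rmul z v) w = rmul z (v * w) := by
  induction z using TensorProduct.induction_on with
  | zero => simp [rmul_zero_left]
  | tmul x u => simp [rmul_tmul, mul_assoc]
  | add a b ha hb => simp only [rmul_add_left, ha, hb]

theorem rmul_algebraMap (z : G ⊗[K] U0) (r : K) :
    rmul z (algebraMap K U0 r) = r • z := by
  induction z using TensorProduct.induction_on with
  | zero => simp [rmul_zero_left]
  | tmul x u =>
      rw [rmul_tmul, ← Algebra.commutes, ← Algebra.smul_def, TensorProduct.tmul_smul]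
  | add a b ha hb => simp only [rmul_add_left, ha, hb, smul_add]

end rmul

section ind

variable (p0 : ZMod 2 → Submodule K U0) (g : Submodule K U0)

theorem g_ind [GradedAlgebra p0]
    (Hg : ∀ x ∈ g, ∀ p : ZMod 2, (DirectSum.decompose p0 x p : U0) ∈ g)
    {P : U0 → Prop} (h0 : P 0) (hadd : ∀ x y, P x → P y → P (x + y))
    (hhom : ∀ (t : ZMod 2) (z : g), (z : U0) ∈ p0 t → P (z : U0)) :
    ∀ z ∈ g, P z := by
  intro z hz
  classical
  rw [← DirectSum.sum_support_decompose p0 z]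
  refine Finset.sum_induction _ P hadd h0 ?_
  intro t _
  exact hhom t ⟨(DirectSum.decompose p0 z t : U0), Hg z hz t⟩ (SetLike.coe_mem _)

variable {G : Type*} [AddCommGroup G] [Module K G]

theorem tens_ind (q : ZMod 2 → Submodule K G) [DirectSum.Decomposition q]
    {P : G ⊗[K] U0 → Prop} (h0 : P 0)
    (hadd : ∀ w₁ w₂, P w₁ → P w₂ → P (w₁ + w₂))
    (ht : ∀ (s : ZMod 2) (y : G), y ∈ q s → ∀ v : U0, P (y ⊗ₜ[K] v)) :
    ∀ w, P w := by
  intro w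
  induction w using TensorProduct.induction_on with
  | zero => exact h0
  | tmul y v =>
      refine DirectSum.Decomposition.inductionOn q (motive := fun y => P (y ⊗ₜ[K] v)) ?_ ?_ ?_ y
      · show P ((0:G) ⊗ₜ[K] v); rw [TensorProduct.zero_tmul]; exact h0
      · intro i m; exact ht i m m.2 v
      · intro m m' hm hm'
        show P ((m + m') ⊗ₜ[K] v)
        rw [TensorProduct.add_tmul]; exact hadd _ _ hm hm'
  | add a b ha hb => exact hadd a b ha hb

end ind

section main

variable {K U0 : Type*} [Field K] [Ring U0] [Algebra K U0]
  (p0 : ZMod 2 → Submodule K U0) [GradedAlgebra p0] (g : Submodule K U0)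
  {G G' : Type*} [AddCommGroup G] [Module K G] [AddCommGroup G'] [Module K G']
  (q : ZMod 2 → Submodule K G) (q' : ZMod 2 → Submodule K G')
  [DirectSum.Decomposition q] [DirectSum.Decomposition q']
  (m : G ⊗[K] U0 →ₗ[K] G' ⊗[K] U0 →ₗ[K] U0)
  (a : U0 →ₗ[K] G ⊗[K] U0 →ₗ[K] G ⊗[K] U0)
  (a' : U0 →ₗ[K] G' ⊗[K] U0 →ₗ[K] G' ⊗[K] U0)
  (b : g →ₗ[K] G →ₗ[K] G) (b' : g →ₗ[K] G' →ₗ[K] G')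

/-- action of a homogeneous element of `g` on a tensor with homogeneous first factor -/
theorem a_g (Ha1 : ∀ z : G ⊗[K] U0, a 1 z = z)
    (HiiA : ∀ (t s : ZMod 2) (z : g), (z : U0) ∈ p0 t → ∀ y : G, y ∈ q s →
      ∀ u v : U0, a (u * (z : U0)) (y ⊗ₜ[K] v)
        = a u (b z y ⊗ₜ[K] v) + ((-1 : K) ^ (s * t).val) • a u (y ⊗ₜ[K] ((z : U0) * v)))
    {t s : ZMod 2} (z : g) (hz : (z : U0) ∈ p0 t) {y : G} (hy : y ∈ q s) (v : U0) :
    a (z : U0) (y ⊗ₜ[K] v)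
      = b z y ⊗ₜ[K] v + ((-1 : K) ^ (s * t).val) • (y ⊗ₜ[K] ((z : U0) * v)) := by
  have h := HiiA t s z hz y hy 1 v
  rwa [one_mul, Ha1, Ha1] at h

theorem algebraMap_act (v : U0) (r : K) : v * algebraMap K U0 r = r • v := by
  rw [← Algebra.commutes, ← Algebra.smul_def]

theorem a_algebraMap (Ha1 : ∀ z : G ⊗[K] U0, a 1 z = z) (r : K) (w : G ⊗[K] U0) :
    a (algebraMap K U0 r) w = r • w := by
  rw [Algebra.algebraMap_eq_smul_one, map_smul, LinearMap.smul_apply, Ha1]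

/-- identity 4/5: `a (u*v) w = a u (a v w)` -/
theorem L4
    (Hg : ∀ x ∈ g, ∀ p : ZMod 2, (DirectSum.decompose p0 x p : U0) ∈ g)
    (Hgen : Algebra.adjoin K (g : Set U0) = ⊤)
    (Ha1 : ∀ z : G ⊗[K] U0, a 1 z = z)
    (HiiA : ∀ (t s : ZMod 2) (z : g), (z : U0) ∈ p0 t → ∀ y : G, y ∈ q s →
      ∀ u v : U0, a (u * (z : U0)) (y ⊗ₜ[K] v)
        = a u (b z y ⊗ₜ[K] v) + ((-1 : K) ^ (s * t).val) • a u (y ⊗ₜ[K] ((z : U0) * v))) :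
    ∀ (u v : U0) (w : G ⊗[K] U0), a (u * v) w = a u (a v w) := by
  have key : ∀ v ∈ Algebra.adjoin K (g : Set U0), ∀ (u : U0) (w : G ⊗[K] U0),
      a (u * v) w = a u (a v w) := by
    intro v hv
    induction hv using Algebra.adjoin_induction with
    | mem c hc =>
        refine g_ind p0 g Hg (P := fun c => ∀ (u : U0) (w : G ⊗[K] U0),
          a (u * c) w = a u (a c w)) ?_ ?_ ?_ c hc
        · intro u w; simp
        · intro c₁ c₂ h1 h2 u w
          simp only [mul_add, map_add, LinearMap.add_apply, h1 u w, h2 u w]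
        · intro t z hz u w
          refine tens_ind q (P := fun w => a (u * (z : U0)) w = a u (a (z : U0) w)) ?_ ?_ ?_ w
          · simp
          · intro w₁ w₂ e1 e2; simp only [map_add, e1, e2]
          · intro s y hy v'
            rw [HiiA t s z hz y hy u v', a_g p0 g q a b Ha1 HiiA z hz hy v',
              map_add, map_smul]
    | algebraMap r =>
        intro u w
        rw [algebraMap_act, a_algebraMap a Ha1, map_smul, LinearMap.smul_apply, map_smul]
    | add v₁ v₂ _ _ h1 h2 =>
        intro u w
        simp only [mul_add, map_add, LinearMap.add_apply, h1 u w, h2 u w]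
    | mul v₁ v₂ _ _ h1 h2 =>
        intro u w
        rw [← mul_assoc, h2 (u * v₁) w, h1 u (a v₂ w), h2 v₁ w]
  intro u v w
  exact key v (by rw [Hgen]; trivial) u w

/-- identity 6/7: `rmul (a u v) w = a u (rmul v w)` -/
theorem L6
    (Hg : ∀ x ∈ g, ∀ p : ZMod 2, (DirectSum.decompose p0 x p : U0) ∈ g)
    (Hgen : Algebra.adjoin K (g : Set U0) = ⊤)
    (Ha1 : ∀ z : G ⊗[K] U0, a 1 z = z)
    (HiiA : ∀ (t s : ZMod 2) (z : g), (z : U0) ∈ p0 t → ∀ y : G, y ∈ q s →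
      ∀ u v : U0, a (u * (z : U0)) (y ⊗ₜ[K] v)
        = a u (b z y ⊗ₜ[K] v) + ((-1 : K) ^ (s * t).val) • a u (y ⊗ₜ[K] ((z : U0) * v))) :
    ∀ (u : U0) (v : G ⊗[K] U0) (w : U0), rmul (a u v) w = a u (rmul v w) := by
  have key : ∀ u ∈ Algebra.adjoin K (g : Set U0), ∀ (v : G ⊗[K] U0) (w : U0),
      rmul (a u v) w = a u (rmul v w) := by
    intro u hu
    induction hu using Algebra.adjoin_induction with
    | mem c hc =>
        refine g_ind p0 g Hg (P := fun c => ∀ (v : G ⊗[K] U0) (w : U0),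
          rmul (a c v) w = a c (rmul v w)) ?_ ?_ ?_ c hc
        · intro v w; simp [rmul_zero_left]
        · intro c₁ c₂ h1 h2 v w
          simp only [map_add, LinearMap.add_apply, rmul_add_left, h1 v w, h2 v w]
        · intro t z hz v w
          refine tens_ind q (P := fun v => rmul (a (z : U0) v) w = a (z : U0) (rmul v w))
            ?_ ?_ ?_ v
          · simp [rmul_zero_left]
          · intro v₁ v₂ e1 e2; simp only [map_add, rmul_add_left, e1, e2]
          · intro s y hy v'
            rw [a_g p0 g q a b Ha1 HiiA z hz hy v', rmul_tmul,
              a_g p0 g q a b Ha1 HiiA z hz hy (v' * w),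
              rmul_add_left, rmul_smul_left, rmul_tmul, rmul_tmul, mul_assoc]
    | algebraMap r =>
        intro v w
        rw [a_algebraMap a Ha1, a_algebraMap a Ha1, rmul_smul_left]
    | add u₁ u₂ _ _ h1 h2 =>
        intro v w
        simp only [map_add, LinearMap.add_apply, rmul_add_left, h1 v w, h2 v w]
    | mul u₁ u₂ _ _ h1 h2 =>
        intro v w
        rw [L4 p0 g q a b Hg Hgen Ha1 HiiA, h1, h2, ← L4 p0 g q a b Hg Hgen Ha1 HiiA]
  intro u v w
  exact key u (by rw [Hgen]; trivial) v w

/-- key lemma for identity 8/9 -/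
theorem starL
    (Hg : ∀ x ∈ g, ∀ p : ZMod 2, (DirectSum.decompose p0 x p : U0) ∈ g)
    (Hgen : Algebra.adjoin K (g : Set U0) = ⊤)
    (HiiM : ∀ (t s : ZMod 2) (z : g), (z : U0) ∈ p0 t → ∀ y : G', y ∈ q' s →
      ∀ (x : G) (u v : U0), m (x ⊗ₜ[K] (u * (z : U0))) (y ⊗ₜ[K] v)
        = m (x ⊗ₜ[K] u) (b' z y ⊗ₜ[K] v)
          + ((-1 : K) ^ (s * t).val) • m (x ⊗ₜ[K] u) (y ⊗ₜ[K] ((z : U0) * v)))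
    (HI : ∀ (x : G) (y : G') (v : U0),
      m (x ⊗ₜ[K] 1) (y ⊗ₜ[K] v) = m (x ⊗ₜ[K] 1) (y ⊗ₜ[K] 1) * v)
    (HIII : ∀ (t sx sy : ZMod 2) (z : g), (z : U0) ∈ p0 t →
      ∀ x : G, x ∈ q sx → ∀ y : G', y ∈ q' sy →
      (z : U0) * m (x ⊗ₜ[K] 1) (y ⊗ₜ[K] 1)
        = m (b z x ⊗ₜ[K] 1) (y ⊗ₜ[K] 1)
          + ((-1 : K) ^ (t * sx).val) • m (x ⊗ₜ[K] 1) (b' z y ⊗ₜ[K] 1)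
          + ((-1 : K) ^ (t * (sx + sy)).val) • (m (x ⊗ₜ[K] 1) (y ⊗ₜ[K] 1) * (z : U0)))
    {t sx : ZMod 2} (z : g) (hz : (z : U0) ∈ p0 t) {x : G} (hx : x ∈ q sx) :
    ∀ (u : U0) (w : G' ⊗[K] U0),
      (z : U0) * m (x ⊗ₜ[K] u) w
        = m (b z x ⊗ₜ[K] u) w
          + ((-1 : K) ^ (sx * t).val) • m (x ⊗ₜ[K] ((z : U0) * u)) w := by
  set P : U0 → Prop := fun u => ∀ w : G' ⊗[K] U0,
    (z : U0) * m (x ⊗ₜ[K] u) w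
      = m (b z x ⊗ₜ[K] u) w
        + ((-1 : K) ^ (sx * t).val) • m (x ⊗ₜ[K] ((z : U0) * u)) w with hP
  have Padd : ∀ u₁ u₂, P u₁ → P u₂ → P (u₁ + u₂) := by
    intro u₁ u₂ h1 h2 w
    simp only [hP, TensorProduct.tmul_add, map_add, LinearMap.add_apply, mul_add,
      smul_add] at h1 h2 ⊢
    rw [h1 w, h2 w]; abel
  have Psmul : ∀ (c : K) u, P u → P (c • u) := by
    intro c u h w
    simp only [hP] at h ⊢
    simp only [TensorProduct.tmul_smul, map_smul, LinearMap.smul_apply, mul_smul_comm]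
    rw [h w]
    module
  have P0 : P 0 := by intro w; simp [hP]
  have base : P 1 := by
    intro w
    refine tens_ind q' (P := fun w => (z : U0) * m (x ⊗ₜ[K] 1) w
      = m (b z x ⊗ₜ[K] 1) w
        + ((-1 : K) ^ (sx * t).val) • m (x ⊗ₜ[K] ((z : U0) * 1)) w) ?_ ?_ ?_ w
    · simp
    · intro w₁ w₂ e1 e2; simp only [map_add, mul_add, smul_add, e1, e2]; abel
    · intro sy y hy v
      rw [mul_one]
      have hM := HiiM t sy z hz y hy x 1 v
      rw [one_mul] at hM
      rw [HI x y v, ← mul_assoc, HIII t sx sy z hz x hx y hy, hM,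
        HI (b z x) y v, HI x (b' z y) v, HI x y ((z : U0) * v)]
      have hs : ((-1 : K)) ^ ((t * (sx + sy)).val)
          = (-1 : K) ^ ((sx * t).val) * (-1 : K) ^ ((sy * t).val) := by
        rw [mul_add, neg_one_pow_add, mul_comm t sx, mul_comm t sy]
      rw [hs, mul_comm t sx]
      simp only [add_mul, smul_mul_assoc, mul_assoc, smul_add, smul_smul]
      module
  have step : ∀ c ∈ Algebra.adjoin K (g : Set U0), ∀ u, P u → P (u * c) := by
    intro c hc
    induction hc using Algebra.adjoin_induction with
    | mem c hcg =>
        refine g_ind p0 g Hg (P := fun c => ∀ u, P u → P (u * c)) ?_ ?_ ?_ c hcg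
        · intro u _; rw [mul_zero]; exact P0
        · intro c₁ c₂ h1 h2 u hu
          rw [mul_add]; exact Padd _ _ (h1 u hu) (h2 u hu)
        · intro t₂ z₂ hz₂ u hu
          intro w
          refine tens_ind q' (P := fun w => (z : U0) * m (x ⊗ₜ[K] (u * (z₂ : U0))) w
            = m (b z x ⊗ₜ[K] (u * (z₂ : U0))) w
              + ((-1 : K) ^ (sx * t).val) • m (x ⊗ₜ[K] ((z : U0) * (u * (z₂ : U0)))) w)
            ?_ ?_ ?_ w
          · simp
          · intro w₁ w₂ e1 e2; simp only [map_add, mul_add, smul_add, e1, e2]; abel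
          · intro sy y hy v
            rw [HiiM t₂ sy z₂ hz₂ y hy x u v,
              HiiM t₂ sy z₂ hz₂ y hy (b z x) u v,
              show (z : U0) * (u * (z₂ : U0)) = ((z : U0) * u) * (z₂ : U0) from
                (mul_assoc _ _ _).symm,
              HiiM t₂ sy z₂ hz₂ y hy x ((z : U0) * u) v,
              mul_add, mul_smul_comm, hu (b' z₂ y ⊗ₜ[K] v), hu (y ⊗ₜ[K] ((z₂ : U0) * v))]
            module
    | algebraMap r =>
        intro u hu
        rw [algebraMap_act]; exact Psmul r u hu
    | add c₁ c₂ _ _ h1 h2 =>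
        intro u hu
        rw [mul_add]; exact Padd _ _ (h1 u hu) (h2 u hu)
    | mul c₁ c₂ _ _ h1 h2 =>
        intro u hu
        rw [← mul_assoc]; exact h2 _ (h1 u hu)
  intro u w
  have h := step u (by rw [Hgen]; trivial) 1 base
  rw [one_mul] at h
  exact h w

/-- identity 8/9: `m (a u v) w = u * m v w` -/
theorem L8
    (Hg : ∀ x ∈ g, ∀ p : ZMod 2, (DirectSum.decompose p0 x p : U0) ∈ g)
    (Hgen : Algebra.adjoin K (g : Set U0) = ⊤)
    (Ha1 : ∀ z : G ⊗[K] U0, a 1 z = z)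
    (HiiA : ∀ (t s : ZMod 2) (z : g), (z : U0) ∈ p0 t → ∀ y : G, y ∈ q s →
      ∀ u v : U0, a (u * (z : U0)) (y ⊗ₜ[K] v)
        = a u (b z y ⊗ₜ[K] v) + ((-1 : K) ^ (s * t).val) • a u (y ⊗ₜ[K] ((z : U0) * v)))
    (HiiM : ∀ (t s : ZMod 2) (z : g), (z : U0) ∈ p0 t → ∀ y : G', y ∈ q' s →
      ∀ (x : G) (u v : U0), m (x ⊗ₜ[K] (u * (z : U0))) (y ⊗ₜ[K] v)
        = m (x ⊗ₜ[K] u) (b' z y ⊗ₜ[K] v)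
          + ((-1 : K) ^ (s * t).val) • m (x ⊗ₜ[K] u) (y ⊗ₜ[K] ((z : U0) * v)))
    (HI : ∀ (x : G) (y : G') (v : U0),
      m (x ⊗ₜ[K] 1) (y ⊗ₜ[K] v) = m (x ⊗ₜ[K] 1) (y ⊗ₜ[K] 1) * v)
    (HIII : ∀ (t sx sy : ZMod 2) (z : g), (z : U0) ∈ p0 t →
      ∀ x : G, x ∈ q sx → ∀ y : G', y ∈ q' sy →
      (z : U0) * m (x ⊗ₜ[K] 1) (y ⊗ₜ[K] 1)
        = m (b z x ⊗ₜ[K] 1) (y ⊗ₜ[K] 1)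
          + ((-1 : K) ^ (t * sx).val) • m (x ⊗ₜ[K] 1) (b' z y ⊗ₜ[K] 1)
          + ((-1 : K) ^ (t * (sx + sy)).val) • (m (x ⊗ₜ[K] 1) (y ⊗ₜ[K] 1) * (z : U0))) :
    ∀ (u : U0) (v : G ⊗[K] U0) (w : G' ⊗[K] U0), m (a u v) w = u * m v w := by
  have key : ∀ u ∈ Algebra.adjoin K (g : Set U0), ∀ (v : G ⊗[K] U0) (w : G' ⊗[K] U0),
      m (a u v) w = u * m v w := by
    intro u hu
    induction hu using Algebra.adjoin_induction with
    | mem c hc =>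
        refine g_ind p0 g Hg (P := fun c => ∀ (v : G ⊗[K] U0) (w : G' ⊗[K] U0),
          m (a c v) w = c * m v w) ?_ ?_ ?_ c hc
        · intro v w; simp
        · intro c₁ c₂ h1 h2 v w
          simp only [map_add, LinearMap.add_apply, add_mul, h1 v w, h2 v w]
        · intro t z hz v w
          refine tens_ind q (P := fun v => m (a (z : U0) v) w = (z : U0) * m v w)
            ?_ ?_ ?_ v
          · simp
          · intro v₁ v₂ e1 e2; simp only [map_add, LinearMap.add_apply, mul_add, e1, e2]
          · intro sx x hx u0
            rw [a_g p0 g q a b Ha1 HiiA z hz hx u0, map_add, LinearMap.add_apply,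
              map_smul, LinearMap.smul_apply,
              starL p0 g q q' m b b' Hg Hgen HiiM HI HIII z hz hx u0 w]
    | algebraMap r =>
        intro v w
        rw [a_algebraMap a Ha1, map_smul, LinearMap.smul_apply, Algebra.smul_def]
    | add u₁ u₂ _ _ h1 h2 =>
        intro v w
        simp only [map_add, LinearMap.add_apply, add_mul, h1 v w, h2 v w]
    | mul u₁ u₂ _ _ h1 h2 =>
        intro v w
        rw [L4 p0 g q a b Hg Hgen Ha1 HiiA, h1, h2, mul_assoc]
  intro u v w
  exact key u (by rw [Hgen]; trivial) v w

/-- identity 10/11: `m u v * w = m u (rmul v w)` -/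
theorem L10
    (Hg : ∀ x ∈ g, ∀ p : ZMod 2, (DirectSum.decompose p0 x p : U0) ∈ g)
    (Hgen : Algebra.adjoin K (g : Set U0) = ⊤)
    (HiiM : ∀ (t s : ZMod 2) (z : g), (z : U0) ∈ p0 t → ∀ y : G', y ∈ q' s →
      ∀ (x : G) (u v : U0), m (x ⊗ₜ[K] (u * (z : U0))) (y ⊗ₜ[K] v)
        = m (x ⊗ₜ[K] u) (b' z y ⊗ₜ[K] v)
          + ((-1 : K) ^ (s * t).val) • m (x ⊗ₜ[K] u) (y ⊗ₜ[K] ((z : U0) * v)))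
    (HI : ∀ (x : G) (y : G') (v : U0),
      m (x ⊗ₜ[K] 1) (y ⊗ₜ[K] v) = m (x ⊗ₜ[K] 1) (y ⊗ₜ[K] 1) * v) :
    ∀ (u : G ⊗[K] U0) (v : G' ⊗[K] U0) (w : U0), m u v * w = m u (rmul v w) := by
  suffices h : ∀ (x : G) (u0 : U0) (v : G' ⊗[K] U0) (w : U0),
      m (x ⊗ₜ[K] u0) v * w = m (x ⊗ₜ[K] u0) (rmul v w) by
    intro u v w
    induction u using TensorProduct.induction_on with
    | zero => simp
    | tmul x u0 => exact h x u0 v w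
    | add u₁ u₂ h1 h2 =>
        simp only [map_add, LinearMap.add_apply, add_mul, h1, h2]
  have key : ∀ c ∈ Algebra.adjoin K (g : Set U0), ∀ u0 : U0,
      (∀ (x : G) (v : G' ⊗[K] U0) (w : U0),
        m (x ⊗ₜ[K] u0) v * w = m (x ⊗ₜ[K] u0) (rmul v w)) →
      ∀ (x : G) (v : G' ⊗[K] U0) (w : U0),
        m (x ⊗ₜ[K] (u0 * c)) v * w = m (x ⊗ₜ[K] (u0 * c)) (rmul v w) := by
    intro c hc
    induction hc using Algebra.adjoin_induction with
    | mem c hcg =>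
        refine g_ind p0 g Hg (P := fun c => ∀ u0 : U0,
          (∀ (x : G) (v : G' ⊗[K] U0) (w : U0),
            m (x ⊗ₜ[K] u0) v * w = m (x ⊗ₜ[K] u0) (rmul v w)) →
          ∀ (x : G) (v : G' ⊗[K] U0) (w : U0),
            m (x ⊗ₜ[K] (u0 * c)) v * w = m (x ⊗ₜ[K] (u0 * c)) (rmul v w)) ?_ ?_ ?_ c hcg
        · intro u0 _ x v w; simp
        · intro c₁ c₂ h1 h2 u0 hu x v w
          simp only [mul_add, TensorProduct.tmul_add, map_add, LinearMap.add_apply,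
            add_mul, h1 u0 hu x v w, h2 u0 hu x v w]
        · intro t z hz u0 hu x v w
          refine tens_ind q' (P := fun v =>
            m (x ⊗ₜ[K] (u0 * (z : U0))) v * w
              = m (x ⊗ₜ[K] (u0 * (z : U0))) (rmul v w)) ?_ ?_ ?_ v
          · simp [rmul_zero_left]
          · intro v₁ v₂ e1 e2
            simp only [map_add, add_mul, rmul_add_left, e1, e2]
          · intro sy y hy v0
            rw [HiiM t sy z hz y hy x u0 v0, rmul_tmul,
              HiiM t sy z hz y hy x u0 (v0 * w), add_mul, smul_mul_assoc,
              hu x (b' z y ⊗ₜ[K] v0) w, hu x (y ⊗ₜ[K] ((z : U0) * v0)) w,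
              rmul_tmul, rmul_tmul, mul_assoc]
    | algebraMap r =>
        intro u0 hu x v w
        rw [algebraMap_act, TensorProduct.tmul_smul, map_smul, LinearMap.smul_apply,
          LinearMap.smul_apply, smul_mul_assoc, hu x v w]
    | add c₁ c₂ _ _ h1 h2 =>
        intro u0 hu x v w
        simp only [mul_add, TensorProduct.tmul_add, map_add, LinearMap.add_apply,
          add_mul, h1 u0 hu x v w, h2 u0 hu x v w]
    | mul c₁ c₂ _ _ h1 h2 =>
        intro u0 hu x v w
        rw [← mul_assoc]
        exact h2 (u0 * c₁) (h1 u0 hu) x v w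
  intro x u0 v w
  have h := key u0 (by rw [Hgen]; trivial) 1 ?base x v w
  · rwa [one_mul] at h
  case base =>
    intro x v w
    induction v using TensorProduct.induction_on with
    | zero => simp [rmul_zero_left]
    | tmul y v0 =>
        rw [HI x y v0, rmul_tmul, HI x y (v0 * w), mul_assoc]
    | add v₁ v₂ e1 e2 =>
        simp only [map_add, add_mul, rmul_add_left, e1, e2]

/-- identity 12/13: `m (rmul u v) w = m u (a' v w)` -/
theorem L12
    (Hg : ∀ x ∈ g, ∀ p : ZMod 2, (DirectSum.decompose p0 x p : U0) ∈ g)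
    (Hgen : Algebra.adjoin K (g : Set U0) = ⊤)
    (Ha'1 : ∀ z : G' ⊗[K] U0, a' 1 z = z)
    (HiiA' : ∀ (t s : ZMod 2) (z : g), (z : U0) ∈ p0 t → ∀ y : G', y ∈ q' s →
      ∀ u v : U0, a' (u * (z : U0)) (y ⊗ₜ[K] v)
        = a' u (b' z y ⊗ₜ[K] v) + ((-1 : K) ^ (s * t).val) • a' u (y ⊗ₜ[K] ((z : U0) * v)))
    (HiiM : ∀ (t s : ZMod 2) (z : g), (z : U0) ∈ p0 t → ∀ y : G', y ∈ q' s →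
      ∀ (x : G) (u v : U0), m (x ⊗ₜ[K] (u * (z : U0))) (y ⊗ₜ[K] v)
        = m (x ⊗ₜ[K] u) (b' z y ⊗ₜ[K] v)
          + ((-1 : K) ^ (s * t).val) • m (x ⊗ₜ[K] u) (y ⊗ₜ[K] ((z : U0) * v))) :
    ∀ (u : G ⊗[K] U0) (v : U0) (w : G' ⊗[K] U0),
      m (rmul u v) w = m u (a' v w) := by
  have key : ∀ v ∈ Algebra.adjoin K (g : Set U0), ∀ (u : G ⊗[K] U0) (w : G' ⊗[K] U0),
      m (rmul u v) w = m u (a' v w) := by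
    intro v hv
    induction hv using Algebra.adjoin_induction with
    | mem c hc =>
        refine g_ind p0 g Hg (P := fun c => ∀ (u : G ⊗[K] U0) (w : G' ⊗[K] U0),
          m (rmul u c) w = m u (a' c w)) ?_ ?_ ?_ c hc
        · intro u w
          have : rmul u (0 : U0) = 0 := by
            induction u using TensorProduct.induction_on with
            | zero => simp [rmul_zero_left]
            | tmul x u0 => rw [rmul_tmul, mul_zero, TensorProduct.tmul_zero]
            | add u₁ u₂ e1 e2 => rw [rmul_add_left, e1, e2, add_zero]
          simp [this]
        · intro c₁ c₂ h1 h2 u w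
          simp only [rmul_add_right, map_add, LinearMap.add_apply, h1 u w, h2 u w]
        · intro t z hz u w
          induction u using TensorProduct.induction_on with
          | zero => simp [rmul_zero_left]
          | tmul x u0 =>
              refine tens_ind q' (P := fun w =>
                m (rmul (x ⊗ₜ[K] u0) (z : U0)) w = m (x ⊗ₜ[K] u0) (a' (z : U0) w))
                ?_ ?_ ?_ w
              · simp
              · intro w₁ w₂ e1 e2; simp only [map_add, e1, e2]
              · intro sy y hy v0
                rw [rmul_tmul, HiiM t sy z hz y hy x u0 v0,
                  a_g p0 g q' a' b' Ha'1 HiiA' z hz hy v0, map_add, map_smul]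
          | add u₁ u₂ e1 e2 =>
              simp only [rmul_add_left, map_add, LinearMap.add_apply, e1, e2]
    | algebraMap r =>
        intro u w
        rw [rmul_algebraMap, a_algebraMap a' Ha'1, map_smul, LinearMap.smul_apply,
          map_smul]
    | add v₁ v₂ _ _ h1 h2 =>
        intro u w
        simp only [rmul_add_right, map_add, LinearMap.add_apply, h1 u w, h2 u w]
    | mul v₁ v₂ _ _ h1 h2 =>
        intro u w
        rw [← rmul_assoc, h2, h1, L4 p0 g q' a' b' Hg Hgen Ha'1 HiiA']
  intro u v w
  exact key v (by rw [Hgen]; trivial) u w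

end main

end FocAux

/-- Assuming additionally (iii):
`z(xy) = ⟦z,x⟧y + (−1)^{|z||x|} x⟦z,y⟧ + (−1)^{|z|(|x|+|y|)}(xy)z`
for parity-homogeneous `z ∈ g`, `x ∈ G_{±1}`, `y ∈ G_{∓1}`, the collection
`U₋₁ = G₋₁ ⊗ U₀`, `U₀`, `U₁ = G₁ ⊗ U₀` with the given products is a focally associative
local superalgebra: the 13 focal associativity identities hold for all elements. -/
theorem focallyAssociative_of_contextHyps
    (K : Type*) [Field K] [CharZero K]
    (U0 : Type*) [Ring U0] [Algebra K U0]
    (p0 : ZMod 2 → Submodule K U0) [GradedAlgebra p0]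
    (g : Submodule K U0)
    (G1 Gm : Type*) [AddCommGroup G1] [Module K G1] [AddCommGroup Gm] [Module K Gm]
    (q1 : ZMod 2 → Submodule K G1) (qm : ZMod 2 → Submodule K Gm)
    [DirectSum.Decomposition q1] [DirectSum.Decomposition qm]
    (mpm : G1 ⊗[K] U0 →ₗ[K] Gm ⊗[K] U0 →ₗ[K] U0)
    (mmp : Gm ⊗[K] U0 →ₗ[K] G1 ⊗[K] U0 →ₗ[K] U0)
    (a0p : U0 →ₗ[K] G1 ⊗[K] U0 →ₗ[K] G1 ⊗[K] U0)
    (a0m : U0 →ₗ[K] Gm ⊗[K] U0 →ₗ[K] Gm ⊗[K] U0)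
    (b1 : g →ₗ[K] G1 →ₗ[K] G1)
    (bm : g →ₗ[K] Gm →ₗ[K] Gm)
    (hyp : ContextHyps K U0 p0 g G1 Gm q1 qm mpm mmp a0p a0m b1 bm)
    -- assumption (iii), case x ∈ G₁, y ∈ G₋₁:
    (hiii_pm : ∀ (t sx sy : ZMod 2) (z : g), (z : U0) ∈ p0 t →
      ∀ x : G1, x ∈ q1 sx → ∀ y : Gm, y ∈ qm sy →
      (z : U0) * mpm (x ⊗ₜ[K] 1) (y ⊗ₜ[K] 1)
        = mpm (b1 z x ⊗ₜ[K] 1) (y ⊗ₜ[K] 1)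
          + ((-1 : K) ^ (t * sx).val) • mpm (x ⊗ₜ[K] 1) (bm z y ⊗ₜ[K] 1)
          + ((-1 : K) ^ (t * (sx + sy)).val) • (mpm (x ⊗ₜ[K] 1) (y ⊗ₜ[K] 1) * (z : U0)))
    -- assumption (iii), case x ∈ G₋₁, y ∈ G₁:
    (hiii_mp : ∀ (t sx sy : ZMod 2) (z : g), (z : U0) ∈ p0 t →
      ∀ x : Gm, x ∈ qm sx → ∀ y : G1, y ∈ q1 sy →
      (z : U0) * mmp (x ⊗ₜ[K] 1) (y ⊗ₜ[K] 1)
        = mmp (bm z x ⊗ₜ[K] 1) (y ⊗ₜ[K] 1)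
          + ((-1 : K) ^ (t * sx).val) • mmp (x ⊗ₜ[K] 1) (b1 z y ⊗ₜ[K] 1)
          + ((-1 : K) ^ (t * (sx + sy)).val) • (mmp (x ⊗ₜ[K] 1) (y ⊗ₜ[K] 1) * (z : U0))) :
    -- (u₀v₀)w₀ = u₀(v₀w₀)
    (∀ u v w : U0, (u * v) * w = u * (v * w)) ∧
    -- (u₁v₀)w₀ = u₁(v₀w₀)
    (∀ (u : G1 ⊗[K] U0) (v w : U0), rmul (rmul u v) w = rmul u (v * w)) ∧
    -- (u₋₁v₀)w₀ = u₋₁(v₀w₀)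
    (∀ (u : Gm ⊗[K] U0) (v w : U0), rmul (rmul u v) w = rmul u (v * w)) ∧
    -- (u₀v₀)w₁ = u₀(v₀w₁)
    (∀ (u v : U0) (w : G1 ⊗[K] U0), a0p (u * v) w = a0p u (a0p v w)) ∧
    -- (u₀v₀)w₋₁ = u₀(v₀w₋₁)
    (∀ (u v : U0) (w : Gm ⊗[K] U0), a0m (u * v) w = a0m u (a0m v w)) ∧
    -- (u₀v₁)w₀ = u₀(v₁w₀)
    (∀ (u : U0) (v : G1 ⊗[K] U0) (w : U0), rmul (a0p u v) w = a0p u (rmul v w)) ∧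
    -- (u₀v₋₁)w₀ = u₀(v₋₁w₀)
    (∀ (u : U0) (v : Gm ⊗[K] U0) (w : U0), rmul (a0m u v) w = a0m u (rmul v w)) ∧
    -- (u₀v₁)w₋₁ = u₀(v₁w₋₁)
    (∀ (u : U0) (v : G1 ⊗[K] U0) (w : Gm ⊗[K] U0), mpm (a0p u v) w = u * mpm v w) ∧
    -- (u₀v₋₁)w₁ = u₀(v₋₁w₁)
    (∀ (u : U0) (v : Gm ⊗[K] U0) (w : G1 ⊗[K] U0), mmp (a0m u v) w = u * mmp v w) ∧
    -- (u₁v₋₁)w₀ = u₁(v₋₁w₀)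
    (∀ (u : G1 ⊗[K] U0) (v : Gm ⊗[K] U0) (w : U0), mpm u v * w = mpm u (rmul v w)) ∧
    -- (u₋₁v₁)w₀ = u₋₁(v₁w₀)
    (∀ (u : Gm ⊗[K] U0) (v : G1 ⊗[K] U0) (w : U0), mmp u v * w = mmp u (rmul v w)) ∧
    -- (u₁v₀)w₋₁ = u₁(v₀w₋₁)
    (∀ (u : G1 ⊗[K] U0) (v : U0) (w : Gm ⊗[K] U0), mpm (rmul u v) w = mpm u (a0m v w)) ∧
    -- (u₋₁v₀)w₁ = u₋₁(v₀w₁)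
    (∀ (u : Gm ⊗[K] U0) (v : U0) (w : G1 ⊗[K] U0), mmp (rmul u v) w = mmp u (a0p v w)) := by
  refine ⟨fun u v w => mul_assoc u v w,
    fun u v w => FocAux.rmul_assoc u v w,
    fun u v w => FocAux.rmul_assoc u v w,
    FocAux.L4 p0 g q1 a0p b1 hyp.g_graded hyp.g_gen hyp.a0p_one hyp.ii_0p,
    FocAux.L4 p0 g qm a0m bm hyp.g_graded hyp.g_gen hyp.a0m_one hyp.ii_0m,
    FocAux.L6 p0 g q1 a0p b1 hyp.g_graded hyp.g_gen hyp.a0p_one hyp.ii_0p,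
    FocAux.L6 p0 g qm a0m bm hyp.g_graded hyp.g_gen hyp.a0m_one hyp.ii_0m,
    FocAux.L8 p0 g q1 qm mpm a0p b1 bm hyp.g_graded hyp.g_gen hyp.a0p_one hyp.ii_0p
      hyp.ii_pm hyp.i_pm hiii_pm,
    FocAux.L8 p0 g qm q1 mmp a0m bm b1 hyp.g_graded hyp.g_gen hyp.a0m_one hyp.ii_0m
      hyp.ii_mp hyp.i_mp hiii_mp,
    FocAux.L10 p0 g qm mpm bm hyp.g_graded hyp.g_gen hyp.ii_pm hyp.i_pm,
    FocAux.L10 p0 g q1 mmp b1 hyp.g_graded hyp.g_gen hyp.ii_mp hyp.i_mp,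
    FocAux.L12 p0 g qm mpm a0m bm hyp.g_graded hyp.g_gen hyp.a0m_one hyp.ii_0m hyp.ii_pm,
    FocAux.L12 p0 g q1 mmp a0p b1 hyp.g_graded hyp.g_gen hyp.a0p_one hyp.ii_0p hyp.ii_mp⟩
end

section
/- Under assumptions (i) and (ii), every element of U_{±1} = G_{±1} ⊗ U₀ can be written as a finite sum of elements of the form u(x ⊗ 1) with u ∈ U₀ and x ∈ G_{±1} (products via the map U₀ × U_{±1} → U_{±1}). -/
open scoped TensorProduct

lemma aux_main {K U0 G : Type*} [Field K] [Ring U0] [Algebra K U0]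
    (p0 : ZMod 2 → Submodule K U0) [GradedAlgebra p0]
    (g : Submodule K U0)
    [AddCommGroup G] [Module K G]
    (q : ZMod 2 → Submodule K G) [DirectSum.Decomposition q]
    (a0 : U0 →ₗ[K] G ⊗[K] U0 →ₗ[K] G ⊗[K] U0)
    (b : g →ₗ[K] G →ₗ[K] G)
    (hg : ∀ x ∈ g, ∀ p : ZMod 2, (DirectSum.decompose p0 x p : U0) ∈ g)
    (hgen : Algebra.adjoin K (g : Set U0) = ⊤)
    (hb : ∀ (t p : ZMod 2) (z : g) (x : G), (z : U0) ∈ p0 t → x ∈ q p → b z x ∈ q (t + p))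
    (hone : ∀ z : G ⊗[K] U0, a0 1 z = z)
    (hii : ∀ (t s : ZMod 2) (z : g), (z : U0) ∈ p0 t → ∀ y : G, y ∈ q s →
      ∀ u v : U0,
      a0 (u * (z : U0)) (y ⊗ₜ[K] v)
        = a0 u (b z y ⊗ₜ[K] v)
          + ((-1 : K) ^ (s * t).val) • a0 u (y ⊗ₜ[K] ((z : U0) * v))) :
    ∀ z : G ⊗[K] U0,
      z ∈ AddSubmonoid.closure {w : G ⊗[K] U0 | ∃ (u : U0) (x : G), w = a0 u (x ⊗ₜ[K] 1)} := by
  classical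
  set S : Set (G ⊗[K] U0) := {w | ∃ (u : U0) (x : G), w = a0 u (x ⊗ₜ[K] 1)} with hS
  set M : Submodule K (G ⊗[K] U0) := Submodule.span K S with hM
  -- Nprop
  have base : ∀ (u : U0) (x : G), a0 u (x ⊗ₜ[K] 1) ∈ M := fun u x =>
    Submodule.subset_span ⟨u, x, rfl⟩
  set N : U0 → Prop := fun w => ∀ (u : U0) (s : ZMod 2) (y : G), y ∈ q s →
    a0 u (y ⊗ₜ[K] w) ∈ M with hN
  have N1 : N 1 := fun u s y _ => base u y
  have Nadd : ∀ w w', N w → N w' → N (w + w') := by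
    intro w w' h h' u s y hy
    rw [TensorProduct.tmul_add, map_add]
    exact add_mem (h u s y hy) (h' u s y hy)
  have Nsmul : ∀ (c : K) w, N w → N (c • w) := by
    intro c w h u s y hy
    rw [TensorProduct.tmul_smul, map_smul]
    exact M.smul_mem c (h u s y hy)
  have Nstep : ∀ z ∈ g, ∀ w, N w → N (z * w) := by
    intro z hz w hw u s y hy
    have hdec : (∑ t ∈ DFinsupp.support (DirectSum.decompose p0 z),
        (DirectSum.decompose p0 z t : U0)) = z := DirectSum.sum_support_decompose p0 z
    rw [← hdec, Finset.sum_mul, TensorProduct.tmul_sum, map_sum]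
    refine Submodule.sum_mem M fun t _ => ?_
    set zt : g := ⟨(DirectSum.decompose p0 z t : U0), hg z hz t⟩ with hzt
    have hmem : (zt : U0) ∈ p0 t := SetLike.coe_mem _
    have heq := hii t s zt hmem y hy u w
    have hkey : ((-1 : K) ^ (s * t).val) • a0 u (y ⊗ₜ[K] ((zt : U0) * w))
        = a0 (u * (zt : U0)) (y ⊗ₜ[K] w) - a0 u (b zt y ⊗ₜ[K] w) := by
      rw [heq]; ring_nf; abel
    have hsub : a0 (u * (zt : U0)) (y ⊗ₜ[K] w) - a0 u (b zt y ⊗ₜ[K] w) ∈ M :=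
      sub_mem (hw (u * (zt : U0)) s y hy) (hw u (t + s) (b zt y) (hb t s zt y hmem hy))
    have hne : ((-1 : K) ^ (s * t).val) ≠ 0 := pow_ne_zero _ (neg_ne_zero.mpr one_ne_zero)
    have := M.smul_mem (((-1 : K) ^ (s * t).val)⁻¹) (hkey ▸ hsub)
    rwa [smul_smul, inv_mul_cancel₀ hne, one_smul] at this
  -- every v multiplies N into N
  have mulN : ∀ v : U0, ∀ w, N w → N (v * w) := by
    intro v
    have hv : v ∈ Algebra.adjoin K (g : Set U0) := hgen ▸ Submodule.mem_top (R := K)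
    induction hv using Algebra.adjoin_induction with
    | mem z hz => exact Nstep z hz
    | algebraMap r =>
      intro w hw
      rw [Algebra.algebraMap_eq_smul_one, smul_mul_assoc, one_mul]
      exact Nsmul r w hw
    | add x y _ _ hx hy =>
      intro w hw
      rw [add_mul]
      exact Nadd _ _ (hx w hw) (hy w hw)
    | mul x y _ _ hx hy =>
      intro w hw
      rw [mul_assoc]
      exact hx _ (hy w hw)
  have Nall : ∀ v : U0, N v := fun v => by
    have := mulN v 1 N1; rwa [mul_one] at this
  -- all tensors in M
  have htmul : ∀ (x : G) (v : U0), x ⊗ₜ[K] v ∈ M := by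
    intro x v
    have hdec : (∑ p ∈ DFinsupp.support (DirectSum.decompose q x),
        (DirectSum.decompose q x p : G)) = x := DirectSum.sum_support_decompose q x
    rw [← hdec, TensorProduct.sum_tmul]
    refine Submodule.sum_mem M fun p _ => ?_
    have := Nall v 1 p (DirectSum.decompose q x p : G) (SetLike.coe_mem _)
    rwa [hone] at this
  have hall : ∀ z : G ⊗[K] U0, z ∈ M := by
    intro z
    induction z with
    | zero => exact zero_mem M
    | tmul x v => exact htmul x v
    | add x y hx hy => exact add_mem hx hy
  -- span ≤ closure
  intro z
  have hsm : ∀ (c : K) (w : G ⊗[K] U0), w ∈ AddSubmonoid.closure S →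
      c • w ∈ AddSubmonoid.closure S := by
    intro c w hw
    induction hw using AddSubmonoid.closure_induction with
    | mem w hw =>
      obtain ⟨u, x, rfl⟩ := hw
      refine AddSubmonoid.subset_closure ⟨u, c • x, ?_⟩
      rw [← TensorProduct.smul_tmul', ← map_smul]
    | zero => simpa using zero_mem _
    | add a b _ _ ha hb => rw [smul_add]; exact add_mem ha hb
  have := hall z
  induction this using Submodule.span_induction with
  | mem w hw => exact AddSubmonoid.subset_closure hw
  | zero => exact zero_mem _
  | add a b _ _ ha hb => exact add_mem ha hb
  | smul c w _ hw => exact hsm c w hw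

/-- Under assumptions (i) and (ii), every element of `U_{±1} = G_{±1} ⊗ U₀`
is a finite sum of elements of the form `u(x ⊗ 1)` with `u ∈ U₀` and `x ∈ G_{±1}`. -/
theorem mem_closure_smul_of_contextHyps
    (K : Type*) [Field K] [CharZero K]
    (U0 : Type*) [Ring U0] [Algebra K U0]
    (p0 : ZMod 2 → Submodule K U0) [GradedAlgebra p0]
    (g : Submodule K U0)
    (G1 Gm : Type*) [AddCommGroup G1] [Module K G1] [AddCommGroup Gm] [Module K Gm]
    (q1 : ZMod 2 → Submodule K G1) (qm : ZMod 2 → Submodule K Gm)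
    [DirectSum.Decomposition q1] [DirectSum.Decomposition qm]
    (mpm : G1 ⊗[K] U0 →ₗ[K] Gm ⊗[K] U0 →ₗ[K] U0)
    (mmp : Gm ⊗[K] U0 →ₗ[K] G1 ⊗[K] U0 →ₗ[K] U0)
    (a0p : U0 →ₗ[K] G1 ⊗[K] U0 →ₗ[K] G1 ⊗[K] U0)
    (a0m : U0 →ₗ[K] Gm ⊗[K] U0 →ₗ[K] Gm ⊗[K] U0)
    (b1 : g →ₗ[K] G1 →ₗ[K] G1)
    (bm : g →ₗ[K] Gm →ₗ[K] Gm)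
    (hyp : ContextHyps K U0 p0 g G1 Gm q1 qm mpm mmp a0p a0m b1 bm) :
    (∀ z : G1 ⊗[K] U0,
      z ∈ AddSubmonoid.closure {w : G1 ⊗[K] U0 | ∃ (u : U0) (x : G1), w = a0p u (x ⊗ₜ[K] 1)}) ∧
    (∀ z : Gm ⊗[K] U0,
      z ∈ AddSubmonoid.closure {w : Gm ⊗[K] U0 | ∃ (u : U0) (x : Gm), w = a0m u (x ⊗ₜ[K] 1)}) := by
  exact ⟨aux_main p0 g q1 a0p b1 hyp.g_graded hyp.g_gen hyp.b1_par hyp.a0p_one hyp.ii_0p,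
    aux_main p0 g qm a0m bm hyp.g_graded hyp.g_gen hyp.bm_par hyp.a0m_one hyp.ii_0m⟩
end

section
/- Let K be a field, r ≥ 1, and B an invertible (r+1)×(r+1) matrix over K with rows and columns indexed by {0,1,…,r}, such that B₀₀ = 0. Let d₀,…,d_r ∈ K be nonzero with d₀ = 1 and d_I^{−1} B_{IJ} = d_J^{−1} B_{JI} for all I, J ∈ {0,1,…,r} (B is symmetrisable with symmetriser d). Then Σ_{i,j=1}^{r} d_i^{−1} B_{ij} (B^{−1})_{i0} (B^{−1})_{j0} = −(B^{−1})₀₀. In particular, if (B^{−1})₀₀ ≠ 0 and x_i := (B^{−1})_{i0}/(B^{−1})₀₀, then Σ_{i,j=1}^{r} d_i^{−1} B_{ij} x_i x_j = −1/(B^{−1})₀₀. -/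
/-- Let `B` be an invertible `(r+1)×(r+1)` matrix over a field `K`, indexed
by `{0,1,…,r}`, with `B₀₀ = 0`, symmetrisable with symmetriser `d` (`d_I ≠ 0`, `d₀ = 1`,
`d_I⁻¹ B_{IJ} = d_J⁻¹ B_{JI}`). Then
`Σ_{i,j=1}^r d_i⁻¹ B_{ij} (B⁻¹)_{i0} (B⁻¹)_{j0} = −(B⁻¹)₀₀`, and if `(B⁻¹)₀₀ ≠ 0` and
`x_i = (B⁻¹)_{i0}/(B⁻¹)₀₀`, then `Σ_{i,j=1}^r d_i⁻¹ B_{ij} x_i x_j = −1/(B⁻¹)₀₀`. -/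
theorem symmetrisable_matrix_inverse_sum_identity
    (K : Type*) [Field K] (r : ℕ) (hr : 1 ≤ r)
    (B : Matrix (Fin (r + 1)) (Fin (r + 1)) K)
    (hB : IsUnit B.det)
    (hB00 : B 0 0 = 0)
    (d : Fin (r + 1) → K) (hd : ∀ I, d I ≠ 0) (hd0 : d 0 = 1)
    (hsym : ∀ I J, (d I)⁻¹ * B I J = (d J)⁻¹ * B J I) :
    (∑ i ∈ Finset.univ.erase 0, ∑ j ∈ Finset.univ.erase 0,
        (d i)⁻¹ * B i j * B⁻¹ i 0 * B⁻¹ j 0) = -(B⁻¹ 0 0) ∧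
    (B⁻¹ 0 0 ≠ 0 →
      (∑ i ∈ Finset.univ.erase 0, ∑ j ∈ Finset.univ.erase 0,
          (d i)⁻¹ * B i j * (B⁻¹ i 0 / B⁻¹ 0 0) * (B⁻¹ j 0 / B⁻¹ 0 0)) = -1 / B⁻¹ 0 0) := by
  set v : Fin (r + 1) → K := fun I => B⁻¹ I 0 with hv
  have hmul : B * B⁻¹ = 1 := Matrix.mul_nonsing_inv B hB
  have hrow : ∀ I : Fin (r + 1), (∑ J, B I J * v J) = if I = 0 then 1 else 0 := by
    intro I
    have h := congrFun (congrFun hmul I) 0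
    simpa [Matrix.mul_apply, Matrix.one_apply, v] using h
  -- the full double sum equals v 0
  have hfull : (∑ I, ∑ J, (d I)⁻¹ * B I J * v I * v J) = v 0 := by
    rw [Finset.sum_comm]
    have step : ∀ J : Fin (r + 1), (∑ I, (d I)⁻¹ * B I J * v I * v J)
        = (d J)⁻¹ * v J * (if J = 0 then 1 else 0) := by
      intro J
      calc (∑ I, (d I)⁻¹ * B I J * v I * v J)
          = ∑ I, (d J)⁻¹ * v J * (B J I * v I) := by
            refine Finset.sum_congr rfl fun I _ => ?_
            calc (d I)⁻¹ * B I J * v I * v J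
                = ((d I)⁻¹ * B I J) * (v I * v J) := by ring
              _ = ((d J)⁻¹ * B J I) * (v I * v J) := by rw [hsym I J]
              _ = (d J)⁻¹ * v J * (B J I * v I) := by ring
        _ = (d J)⁻¹ * v J * ∑ I, B J I * v I := by rw [← Finset.mul_sum]
        _ = (d J)⁻¹ * v J * (if J = 0 then 1 else 0) := by rw [hrow J]
    rw [Finset.sum_congr rfl fun J _ => step J]
    simp [hd0]
  -- row 0 sum
  have hrow0 : (∑ J, B 0 J * v J) = 1 := by simpa using hrow 0
  have hrow0' : (∑ J ∈ Finset.univ.erase 0, B 0 J * v J) = 1 := by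
    have := Finset.add_sum_erase Finset.univ (fun J => B 0 J * v J)
      (Finset.mem_univ (0 : Fin (r + 1)))
    simp only [hB00, zero_mul, zero_add, hrow0] at this
    exact this
  -- split the full sum
  have hsplit : (∑ I, ∑ J, (d I)⁻¹ * B I J * v I * v J)
      = (∑ J, (d 0)⁻¹ * B 0 J * v 0 * v J)
        + ∑ I ∈ Finset.univ.erase 0, ∑ J, (d I)⁻¹ * B I J * v I * v J := by
    exact (Finset.add_sum_erase Finset.univ
      (fun I => ∑ J, (d I)⁻¹ * B I J * v I * v J) (Finset.mem_univ 0)).symm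
  have h1 : (∑ J, (d 0)⁻¹ * B 0 J * v 0 * v J) = v 0 := by
    have : (∑ J, (d 0)⁻¹ * B 0 J * v 0 * v J) = v 0 * ∑ J, B 0 J * v J := by
      rw [Finset.mul_sum]
      refine Finset.sum_congr rfl fun J _ => ?_
      rw [hd0]; ring
    rw [this, hrow0, mul_one]
  have hsplit2 : ∀ I : Fin (r + 1), (∑ J, (d I)⁻¹ * B I J * v I * v J)
      = (d I)⁻¹ * B I 0 * v I * v 0
        + ∑ J ∈ Finset.univ.erase 0, (d I)⁻¹ * B I J * v I * v J := by
    intro I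
    exact (Finset.add_sum_erase Finset.univ
      (fun J => (d I)⁻¹ * B I J * v I * v J) (Finset.mem_univ 0)).symm
  have h2 : (∑ I ∈ Finset.univ.erase 0, (d I)⁻¹ * B I 0 * v I * v 0) = v 0 := by
    have heach : ∀ I : Fin (r + 1), (d I)⁻¹ * B I 0 * v I * v 0
        = v 0 * (B 0 I * v I) := by
      intro I
      calc (d I)⁻¹ * B I 0 * v I * v 0 = ((d I)⁻¹ * B I 0) * (v I * v 0) := by ring
        _ = ((d 0)⁻¹ * B 0 I) * (v I * v 0) := by rw [hsym I 0]
        _ = v 0 * (B 0 I * v I) := by rw [hd0]; ring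
    rw [Finset.sum_congr rfl fun I _ => heach I, ← Finset.mul_sum, hrow0', mul_one]
  -- main identity
  have hmain : (∑ i ∈ Finset.univ.erase 0, ∑ j ∈ Finset.univ.erase 0,
      (d i)⁻¹ * B i j * v i * v j) = -(v 0) := by
    have hS : (∑ I ∈ Finset.univ.erase 0, ∑ J, (d I)⁻¹ * B I J * v I * v J)
        = v 0 + ∑ i ∈ Finset.univ.erase 0, ∑ j ∈ Finset.univ.erase 0,
            (d i)⁻¹ * B i j * v i * v j := by
      rw [Finset.sum_congr rfl fun I _ => hsplit2 I, Finset.sum_add_distrib, h2]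
    have := hfull
    rw [hsplit, h1, hS] at this
    linear_combination this
  constructor
  · exact hmain
  · intro h0
    have hterm : ∀ i j : Fin (r + 1),
        (d i)⁻¹ * B i j * (v i / v 0) * (v j / v 0)
          = ((d i)⁻¹ * B i j * v i * v j) * (v 0 * v 0)⁻¹ := by
      intro i j
      field_simp
    calc (∑ i ∈ Finset.univ.erase 0, ∑ j ∈ Finset.univ.erase 0,
          (d i)⁻¹ * B i j * (v i / v 0) * (v j / v 0))
        = (∑ i ∈ Finset.univ.erase 0, ∑ j ∈ Finset.univ.erase 0,
          (d i)⁻¹ * B i j * v i * v j) * (v 0 * v 0)⁻¹ := by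
          rw [Finset.sum_mul]
          refine Finset.sum_congr rfl fun i _ => ?_
          rw [Finset.sum_mul]
          exact Finset.sum_congr rfl fun j _ => hterm i j
      _ = -(v 0) * (v 0 * v 0)⁻¹ := by rw [hmain]
      _ = -1 / v 0 := by field_simp
end
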